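/- If M ⊆ ℤ² is piecewise syndetic, α ∈ ℤ, δ ∈ ℤ \ {0}, and t ∈ ℤ, then the set {(A + αD + t, δD) : (A, D) ∈ M} is piecewise syndetic in ℤ². -/

import Mathlib

/-- A subset of an abelian group is thick if it contains a translate of every finite set. -/
def Thick {G : Type*} [AddCommGroup G] (T : Set G) : Prop :=
  ∀ F : Finset G, ∃ g : G, ∀ f ∈ F, g + f ∈ T

/-- A subset is piecewise syndetic if a finite union of its translates is thick. -/
def PWSyn {G : Type*} [AddCommGroup G] (S : Set G) : Prop :=
  ∃ F : Finset G, Thick {x : G | ∃ t ∈ F, x + t ∈ S}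

/-- Specialized affine-map lemma: if M ⊆ ℤ² is piecewise syndetic then so is
{(A + αD + t, δD) : (A, D) ∈ M} for δ ≠ 0. -/
theorem pwSyn_affine_image' (M : Set (ℤ × ℤ)) (hM : PWSyn M) (α : ℤ) (δ : ℤ) (hδ : δ ≠ 0)
    (t : ℤ) :
    PWSyn {p : ℤ × ℤ | ∃ q ∈ M, p = (q.1 + α * q.2 + t, δ * q.2)} := by
  obtain ⟨F, hF⟩ := hM
  refine ⟨(F ×ˢ Finset.range δ.natAbs).image
    (fun p => (p.1.1 + α * p.1.2, δ * p.1.2 - (p.2 : ℤ))), ?_⟩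
  intro E
  obtain ⟨g₀, hg₀⟩ := hF (E.image (fun e => (e.1 - α * (e.2 / δ), e.2 / δ)))
  refine ⟨(g₀.1 + α * g₀.2 + t, δ * g₀.2), ?_⟩
  intro e he
  obtain ⟨v, hv, hvM⟩ := hg₀ _ (Finset.mem_image_of_mem _ he)
  have hs0 : 0 ≤ e.2 % δ := Int.emod_nonneg _ hδ
  have hslt : e.2 % δ < |δ| := Int.emod_lt_abs _ hδ
  have hsn : (e.2 % δ).toNat < δ.natAbs := by
    rw [Int.abs_eq_natAbs] at hslt; omega
  refine ⟨(v.1 + α * v.2, δ * v.2 - e.2 % δ), ?_, ?_⟩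
  · refine Finset.mem_image.mpr ⟨(v, (e.2 % δ).toNat),
      Finset.mem_product.mpr ⟨hv, Finset.mem_range.mpr hsn⟩, ?_⟩
    simp [Int.toNat_of_nonneg hs0]
  · refine ⟨g₀ + (e.1 - α * (e.2 / δ), e.2 / δ) + v, hvM, ?_⟩
    have hde : δ * (e.2 / δ) + e.2 % δ = e.2 := Int.mul_ediv_add_emod e.2 δ
    ext <;> (simp [Prod.add_def]; ring_nf; try omega)
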